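/- (Sufficiency part of the main Theorem.) Let m, n₀, n₁ be positive integers and suppose there exist positive integers l, k, s, r such that (i) n₁ = l·(m·k − 1), (ii) s·n₁ = k·l + r·n₀, and (iii) r divides s·k·l. Then the polynomials x(λ) = k·(n₀ + n₁·λ), z(λ) = (k·l/r)·(s + r·λ), y(λ) = (n₀ + n₁·λ)·(s + r·λ) have integer coefficients, satisfy x(t) > 0, y(t) > 0, z(t) > 0 for every natural number t, and form an integer polynomial solution of equation (2), i.e. m/(n₀ + n₁·t) = 1/x(t) + 1/y(t) + 1/z(t) for every natural number t. -/

import Mathlib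

open Polynomial

/-- `x, y, z ∈ ℤ[λ]` form an integer polynomial solution of equation (2)
for parameters `m, n₀, n₁`: they take positive values on the naturals and
satisfy `m·x·y·z = (n₀ + n₁·λ)·(x·y + x·z + y·z)` as polynomials. -/
def IsIntPolySolution (m n₀ n₁ : ℤ) (x y z : Polynomial ℤ) : Prop :=
  (∀ t : ℕ, 0 < x.eval (t : ℤ)) ∧ (∀ t : ℕ, 0 < y.eval (t : ℤ)) ∧
  (∀ t : ℕ, 0 < z.eval (t : ℤ)) ∧
  C m * (x * y * z) = (C n₀ + C n₁ * X) * (x * y + x * z + y * z)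

/-- Sufficiency part of the main Theorem. -/
theorem sufficiency (m n₀ n₁ l k s r : ℤ)
    (hm : 0 < m) (hn₀ : 0 < n₀) (hn₁ : 0 < n₁)
    (hl : 0 < l) (hk : 0 < k) (hs : 0 < s) (hr : 0 < r)
    (hi : n₁ = l * (m * k - 1))
    (hii : s * n₁ = k * l + r * n₀)
    (hiii : r ∣ s * k * l) :
    IsIntPolySolution m n₀ n₁
      (C k * (C n₀ + C n₁ * X))
      ((C n₀ + C n₁ * X) * (C s + C r * X))
      (C (k * l * s / r) + C (k * l) * X) ∧
    ∀ t : ℕ, (m : ℚ) / ((n₀ : ℚ) + (n₁ : ℚ) * t) =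
      1 / (((C k * (C n₀ + C n₁ * X)).eval (t : ℤ) : ℤ) : ℚ) +
      1 / ((((C n₀ + C n₁ * X) * (C s + C r * X)).eval (t : ℤ) : ℤ) : ℚ) +
      1 / (((C (k * l * s / r) + C (k * l) * X).eval (t : ℤ) : ℤ) : ℚ) := by
  set d : ℤ := k * l * s / r with hd_def
  have hdvd : r ∣ k * l * s := by
    rw [show k * l * s = s * k * l from by ring]; exact hiii
  have hd : r * d = k * l * s := Int.mul_ediv_cancel' hdvd
  have hdpos : 0 < d := by
    nlinarith [mul_pos (mul_pos hk hl) hs]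
  -- positivity of the three polynomials at each natural
  have hxpos : ∀ t : ℕ, 0 < (C k * (C n₀ + C n₁ * X)).eval (t : ℤ) := by
    intro t
    have ht : (0 : ℤ) ≤ (t : ℤ) := Int.natCast_nonneg t
    simp only [eval_mul, eval_add, eval_C, eval_X]
    have hN : (0:ℤ) < n₀ + n₁ * (t:ℤ) := by nlinarith [mul_nonneg hn₁.le ht]
    exact mul_pos hk hN
  have hypos : ∀ t : ℕ, 0 < ((C n₀ + C n₁ * X) * (C s + C r * X)).eval (t : ℤ) := by
    intro t
    have ht : (0 : ℤ) ≤ (t : ℤ) := Int.natCast_nonneg t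
    simp only [eval_mul, eval_add, eval_C, eval_X]
    have hN : (0:ℤ) < n₀ + n₁ * (t:ℤ) := by nlinarith [mul_nonneg hn₁.le ht]
    have hS : (0:ℤ) < s + r * (t:ℤ) := by nlinarith [mul_nonneg hr.le ht]
    exact mul_pos hN hS
  have hzpos : ∀ t : ℕ, 0 < (C d + C (k * l) * X).eval (t : ℤ) := by
    intro t
    have ht : (0 : ℤ) ≤ (t : ℤ) := Int.natCast_nonneg t
    simp only [eval_mul, eval_add, eval_C, eval_X]
    nlinarith [mul_nonneg (mul_pos hk hl).le ht]
  -- the polynomial identity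
  have h1' : (C n₁ : Polynomial ℤ) = C l * (C m * C k - 1) := by
    rw [hi, C_mul, C_sub, C_mul, C_1]
  have h2' : (C s : Polynomial ℤ) * C n₁ = C k * C l + C r * C n₀ := by
    rw [← C_mul, hii, C_add, C_mul, C_mul]
  have h3' : (C r : Polynomial ℤ) * C d = C k * C l * C s := by
    rw [← C_mul, hd, C_mul, C_mul]
  have hpoly : C m * ((C k * (C n₀ + C n₁ * X)) * ((C n₀ + C n₁ * X) * (C s + C r * X)) *
        (C d + C (k * l) * X)) =
      (C n₀ + C n₁ * X) * ((C k * (C n₀ + C n₁ * X)) * ((C n₀ + C n₁ * X) * (C s + C r * X)) +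
        (C k * (C n₀ + C n₁ * X)) * (C d + C (k * l) * X) +
        ((C n₀ + C n₁ * X) * (C s + C r * X)) * (C d + C (k * l) * X)) := by
    have hrC : (C r : Polynomial ℤ) ≠ 0 := by
      simpa using hr.ne'
    apply mul_left_cancel₀ hrC
    have hkl : (C (k * l) : Polynomial ℤ) = C k * C l := C_mul
    rw [hkl]
    set N : Polynomial ℤ := C n₀ + C n₁ * X with hN
    set S : Polynomial ℤ := C s + C r * X with hS
    linear_combination (C m * (C k * N) * (N * S) - N * (C k * N) - N * (N * S)) * h3' +
      C k * N ^ 2 * S * h2' - C k * N ^ 2 * S ^ 2 * h1'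
  refine ⟨⟨hxpos, hypos, hzpos, hpoly⟩, ?_⟩
  intro t
  have hE := congrArg (fun p => Polynomial.eval ((t : ℤ)) p) hpoly
  simp only [eval_mul, eval_add, eval_C, eval_X] at hE
  set a : ℤ := (t : ℤ) with ha
  have hx := hxpos t
  have hy := hypos t
  have hz := hzpos t
  simp only [eval_mul, eval_add, eval_C, eval_X] at hx hy hz ⊢
  have hNQ : ((n₀ : ℚ) + (n₁ : ℚ) * t) = ((n₀ + n₁ * a : ℤ) : ℚ) := by
    push_cast [ha]; ring
  rw [hNQ]
  have hNpos : (0 : ℤ) < n₀ + n₁ * a := by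
    have ht : (0 : ℤ) ≤ a := by rw [ha]; exact Int.natCast_nonneg t
    nlinarith
  have hxQ : ((k * (n₀ + n₁ * a) : ℤ) : ℚ) ≠ 0 := by
    exact_mod_cast hx.ne'
  have hyQ : (((n₀ + n₁ * a) * (s + r * a) : ℤ) : ℚ) ≠ 0 := by
    exact_mod_cast hy.ne'
  have hzQ : ((d + k * l * a : ℤ) : ℚ) ≠ 0 := by
    exact_mod_cast hz.ne'
  have hNQ' : ((n₀ + n₁ * a : ℤ) : ℚ) ≠ 0 := by
    exact_mod_cast hNpos.ne'
  have hEQ : (m : ℚ) * ((k * (n₀ + n₁ * a)) * ((n₀ + n₁ * a) * (s + r * a)) * (d + k * l * a)) =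
      ((n₀ : ℚ) + n₁ * a) * ((k * (n₀ + n₁ * a)) * ((n₀ + n₁ * a) * (s + r * a)) +
        (k * (n₀ + n₁ * a)) * (d + k * l * a) +
        ((n₀ + n₁ * a) * (s + r * a)) * (d + k * l * a)) := by
    exact_mod_cast hE
  push_cast
  push_cast at hxQ hyQ hzQ hNQ' ⊢
  rw [div_add_div _ _ hxQ hyQ, div_add_div _ _ (mul_ne_zero hxQ hyQ) hzQ,
    div_eq_div_iff hNQ' (mul_ne_zero (mul_ne_zero hxQ hyQ) hzQ)]
  linear_combination hEQ
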